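/- Let u_m > 0 and define the symmetric linear saturation sat(v) := v if |v| < u_m and sat(v) := sgn(v)·u_m if |v| ≥ u_m (equivalently sat(v) = max(−u_m, min(u_m, v))). Then for all v ∈ ℝ, |sat(v) − u_m·tanh(v/u_m)| ≤ u_m·(1 − tanh(1)). -/

import Mathlib

open Real

lemma tanh_lt_one' (x : ℝ) : Real.tanh x < 1 := by
  rw [Real.tanh_eq_sinh_div_cosh, div_lt_one (Real.cosh_pos _)]
  have := Real.exp_pos (-x)
  have h := Real.cosh_sub_sinh x
  linarith

lemma tanh_sub_tanh (a b : ℝ) :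
    Real.tanh a - Real.tanh b = Real.sinh (a - b) / (Real.cosh a * Real.cosh b) := by
  rw [Real.tanh_eq_sinh_div_cosh, Real.tanh_eq_sinh_div_cosh,
    div_sub_div _ _ (Real.cosh_pos (x := a)).ne' (Real.cosh_pos (x := b)).ne',
    Real.sinh_sub]

lemma tanh_mono {a b : ℝ} (h : a ≤ b) : Real.tanh a ≤ Real.tanh b := by
  have := tanh_sub_tanh b a
  have h1 : 0 ≤ Real.sinh (b - a) := Real.sinh_nonneg_iff.mpr (by linarith)
  have h2 : 0 < Real.cosh b * Real.cosh a := mul_pos (Real.cosh_pos _) (Real.cosh_pos _)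
  nlinarith [div_nonneg h1 h2.le]

lemma sinh_le_mul_cosh {x : ℝ} (hx : 0 ≤ x) : Real.sinh x ≤ x * Real.cosh x := by
  have hmono : MonotoneOn (fun y : ℝ => y * Real.cosh y - Real.sinh y) (Set.Ici 0) := by
    have hd : ∀ y : ℝ, HasDerivAt (fun y : ℝ => y * Real.cosh y - Real.sinh y)
        (y * Real.sinh y) y := by
      intro y
      have h1 := (hasDerivAt_id y).mul (Real.hasDerivAt_cosh y)
      have h2 := h1.sub (Real.hasDerivAt_sinh y)
      have h3 := h2
      simp only [id_eq, one_mul, add_sub_cancel_left] at h3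
      exact h3
    apply monotoneOn_of_deriv_nonneg (convex_Ici 0)
    · exact (Continuous.sub (continuous_id.mul Real.continuous_cosh)
        Real.continuous_sinh).continuousOn
    · intro y hy
      exact (hd y).differentiableAt.differentiableWithinAt
    · intro y hy
      rw [(hd y).deriv]
      rw [interior_Ici] at hy
      exact mul_nonneg hy.le (Real.sinh_nonneg_iff.mpr hy.le)
  have := hmono (Set.self_mem_Ici) (Set.mem_Ici.mpr hx) hx
  simp at this
  linarith

lemma tanh_le_self {x : ℝ} (hx : 0 ≤ x) : Real.tanh x ≤ x := by
  rw [Real.tanh_eq_sinh_div_cosh, div_le_iff₀ (Real.cosh_pos _)]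
  exact sinh_le_mul_cosh hx

lemma tanh_one_sub_tanh {t : ℝ} (ht : 0 ≤ t) (ht1 : t ≤ 1) :
    Real.tanh 1 - Real.tanh t ≤ 1 - t := by
  rw [tanh_sub_tanh]
  have hc : Real.cosh (1 - t) ≤ Real.cosh 1 * Real.cosh t := by
    have := Real.cosh_sub 1 t
    nlinarith [Real.sinh_nonneg_iff.mpr ht, Real.sinh_nonneg_iff.mpr (le_of_lt one_pos)]
  have hs : 0 ≤ Real.sinh (1 - t) := Real.sinh_nonneg_iff.mpr (by linarith)
  have h1 : Real.sinh (1 - t) / (Real.cosh 1 * Real.cosh t) ≤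
      Real.sinh (1 - t) / Real.cosh (1 - t) :=
    div_le_div_of_nonneg_left hs (Real.cosh_pos _) hc
  have h2 : Real.sinh (1 - t) / Real.cosh (1 - t) ≤ 1 - t := by
    rw [← Real.tanh_eq_sinh_div_cosh]
    exact tanh_le_self (by linarith)
  linarith

noncomputable def sat (u_m v : ℝ) : ℝ :=
  if |v| < u_m then v else Real.sign v * u_m

lemma sat_neg (u_m v : ℝ) : sat u_m (-v) = -sat u_m v := by
  unfold sat
  rw [abs_neg, Real.sign_neg]
  split <;> ring

lemma key (u_m : ℝ) (hu : 0 < u_m) (v : ℝ) (hv : 0 ≤ v) :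
    |sat u_m v - u_m * Real.tanh (v / u_m)| ≤ u_m * (1 - Real.tanh 1) := by
  have ht0 : 0 ≤ v / u_m := div_nonneg hv hu.le
  have hbnd : 0 ≤ 1 - Real.tanh 1 := by linarith [tanh_lt_one' 1]
  unfold sat
  split
  · rename_i h
    have hv1 : v < u_m := lt_of_abs_lt h
    have ht1 : v / u_m ≤ 1 := by rw [div_le_one hu]; exact hv1.le
    have hle : Real.tanh (v / u_m) ≤ v / u_m := tanh_le_self ht0
    have h2 : v / u_m - Real.tanh (v / u_m) ≤ 1 - Real.tanh 1 := by
      have := tanh_one_sub_tanh ht0 ht1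
      linarith
    have hv' : u_m * (v / u_m) = v := by field_simp
    have hle' := mul_le_mul_of_nonneg_left hle hu.le
    rw [abs_le]
    constructor
    · nlinarith
    · have : v - u_m * Real.tanh (v / u_m) = u_m * (v / u_m - Real.tanh (v / u_m)) := by
        field_simp
      rw [this]
      exact mul_le_mul_of_nonneg_left h2 hu.le
  · rename_i h
    have hvu : u_m ≤ v := by
      rcases abs_cases v with ⟨h1, _⟩ | ⟨h1, h2⟩
      · rw [h1] at h; linarith [not_lt.mp h]
      · linarith
    have hvpos : 0 < v := lt_of_lt_of_le hu hvu
    rw [Real.sign_of_pos hvpos, one_mul]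
    have ht1 : 1 ≤ v / u_m := (one_le_div hu).mpr hvu
    have h1 : Real.tanh 1 ≤ Real.tanh (v / u_m) := tanh_mono ht1
    have h2 : Real.tanh (v / u_m) < 1 := tanh_lt_one' _
    rw [abs_le]
    constructor <;> nlinarith

theorem sat_tanh_approx_bound (u_m : ℝ) (hu : 0 < u_m) (v : ℝ) :
    |sat u_m v - u_m * Real.tanh (v / u_m)| ≤ u_m * (1 - Real.tanh 1) := by
  rcases le_or_gt 0 v with hv | hv
  · exact key u_m hu v hv
  · have h := key u_m hu (-v) (by linarith)
    rw [sat_neg, neg_div, Real.tanh_neg] at h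
    rw [← abs_neg]
    convert h using 2
    ring
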